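/- Let K be a field of characteristic ≠ 2, M a finite-dimensional K-vector space, and α a nondegenerate symmetric bilinear form on M. Let Sym(M) = { f ∈ End_K(M) : α(f u, v) = α(u, f v) for all u, v ∈ M }. Then every inner ideal I of the Jordan pair (Sym(M), Sym(M)) — i.e. every K-subspace I ⊆ Sym(M) with f ∘ y ∘ f ∈ I for all f ∈ I and all y ∈ Sym(M) — is of the form I = I_e = { f ∈ Sym(M) : e ⊆ ker f } for some subspace e ⊆ M, and every such inner ideal is principal: I = { x ∘ y ∘ x : y ∈ Sym(M) } for some x ∈ Sym(M). -/

import Mathlib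

/-- `f` is a symmetric operator with respect to the bilinear form `α`. -/
def IsSymOp {K V : Type*} [Field K] [AddCommGroup V] [Module K V]
    (α : V →ₗ[K] V →ₗ[K] K) (f : Module.End K V) : Prop :=
  ∀ u v : V, α (f u) v = α u (f v)

section Aux

variable {K V : Type*} [Field K] [AddCommGroup V] [Module K V]
variable (α : V →ₗ[K] V →ₗ[K] K)

/-- The rank-one symmetric operator `u ↦ α w u • w`. -/
def Qop (w : V) : Module.End K V := (α w).smulRight w

/-- The symmetric operator `u ↦ α w' u • w + α w u • w'`. -/
def Sop (w w' : V) : Module.End K V := (α w').smulRight w + (α w).smulRight w'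

@[simp] lemma Qop_apply (w u : V) : Qop α w u = α w u • w := rfl

@[simp] lemma Sop_apply (w w' u : V) : Sop α w w' u = α w' u • w + α w u • w' := rfl

lemma isSymOp_Qop (hsymm : ∀ u v : V, α u v = α v u) (w : V) : IsSymOp α (Qop α w) := by
  intro u v
  simp only [Qop_apply, map_smul, LinearMap.smul_apply, smul_eq_mul]
  rw [hsymm u w]; ring

lemma isSymOp_Sop (hsymm : ∀ u v : V, α u v = α v u) (w w' : V) : IsSymOp α (Sop α w w') := by
  intro u v
  simp only [Sop_apply, map_add, map_smul, LinearMap.add_apply, LinearMap.smul_apply,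
    smul_eq_mul]
  rw [hsymm u w, hsymm u w']; ring

lemma Sop_zero_left (w' : V) : Sop α 0 w' = 0 := by
  ext u; simp [Sop]

lemma Sop_comm (w w' : V) : Sop α w w' = Sop α w' w := add_comm _ _

lemma Sop_add_left (w₁ w₂ w' : V) :
    Sop α (w₁ + w₂) w' = Sop α w₁ w' + Sop α w₂ w' := by
  ext u; simp [Sop, smul_add, add_smul]; abel

lemma Sop_smul_left (c : K) (w w' : V) :
    Sop α (c • w) w' = c • Sop α w w' := by
  ext u
  simp only [Sop_apply, map_smul, LinearMap.smul_apply, smul_eq_mul, smul_add, smul_smul]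
  rw [mul_comm ((α w') u) c]


lemma Qop_eq_smul_Sop (hchar : (2 : K) ≠ 0) (w : V) :
    Qop α w = (2 : K)⁻¹ • Sop α w w := by
  ext u
  simp only [Qop_apply, LinearMap.smul_apply, Sop_apply]
  rw [← two_smul K (α w u • w), smul_smul, smul_smul, inv_mul_cancel₀ hchar, one_mul]

lemma comp_Qop_comp (hsymm : ∀ u v : V, α u v = α v u) {f : Module.End K V} (hf : IsSymOp α f) (v : V) :
    f * Qop α v * f = Qop α (f v) := by
  ext u
  simp only [Module.End.mul_apply, Qop_apply, map_smul]
  congr 1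
  rw [hsymm v (f u), hf u v, hsymm u (f v)]

lemma Qop_comp_Qop (hsymm : ∀ u v : V, α u v = α v u) {y : Module.End K V} (hy : IsSymOp α y) (w w' : V) :
    Qop α w * y * Qop α w' + Qop α w' * y * Qop α w = α w (y w') • Sop α w w' := by
  have hkey : α w' (y w) = α w (y w') := by
    rw [hsymm w' (y w), hy w w']
  ext u
  simp only [LinearMap.add_apply, Module.End.mul_apply, Qop_apply, map_smul,
    LinearMap.smul_apply, Sop_apply, smul_eq_mul, smul_add, smul_smul, hkey]
  ring_nf

lemma exists_good (hsymm : ∀ u v : V, α u v = α v u) (hnd : ∀ v : V, (∀ w : V, α v w = 0) → v = 0)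
    {w w' : V} (hw : w ≠ 0) (hw' : w' ≠ 0) :
    ∃ a : V, α a w' ≠ 0 ∧ α w a ≠ 0 := by
  have h1 : ∃ u, α w u ≠ 0 := by
    by_contra h; push_neg at h; exact hw (hnd w h)
  have h2 : ∃ u', α w' u' ≠ 0 := by
    by_contra h; push_neg at h; exact hw' (hnd w' h)
  obtain ⟨u, hu⟩ := h1
  obtain ⟨u', hu'⟩ := h2
  by_cases hc1 : α w u' = 0
  · by_cases hc2 : α u w' = 0
    · refine ⟨u + u', ?_, ?_⟩
      · rw [map_add, LinearMap.add_apply]  -- α (u+u') w'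
        rw [hc2, zero_add]
        rw [hsymm u' w']; exact hu'
      · rw [map_add, hc1, add_zero]; exact hu
    · exact ⟨u, hc2, hu⟩
  · refine ⟨u', ?_, hc1⟩
    rw [hsymm u' w']; exact hu'

lemma exists_symOp_eq (hsymm : ∀ u v : V, α u v = α v u)
    (hnd : ∀ v : V, (∀ w : V, α v w = 0) → v = 0) [FiniteDimensional K V]
    {x : Module.End K V} (hx : IsSymOp α x)
    {g : Module.End K V} (hg : IsSymOp α g) (hker : LinearMap.ker x ≤ LinearMap.ker g) :
    ∃ y : Module.End K V, IsSymOp α y ∧ g = x * y * x := by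
  classical
  obtain ⟨U, hU⟩ := Submodule.exists_isCompl (LinearMap.range x)
  obtain ⟨s, hs⟩ := x.rangeRestrict.exists_rightInverse_of_surjective x.range_rangeRestrict
  set t : V →ₗ[K] V := s ∘ₗ (LinearMap.range x).linearProjOfIsCompl U hU with ht
  have hxt : ∀ v, x (t (x v)) = x v := by
    intro v
    have h1 : (LinearMap.range x).linearProjOfIsCompl U hU (x v)
        = ⟨x v, LinearMap.mem_range_self x v⟩ := by
      exact Submodule.linearProjOfIsCompl_apply_left hU ⟨x v, LinearMap.mem_range_self x v⟩
    have h2 : x (s ⟨x v, LinearMap.mem_range_self x v⟩)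
        = ((x.rangeRestrict (s ⟨x v, LinearMap.mem_range_self x v⟩)) : V) := rfl
    rw [ht, LinearMap.comp_apply, h1, h2]
    rw [← LinearMap.comp_apply x.rangeRestrict s, hs]
    rfl
  have hgt : ∀ v, g (t (x v)) = g v := by
    intro v
    have hk : t (x v) - v ∈ LinearMap.ker g := by
      apply hker
      rw [LinearMap.mem_ker, map_sub, hxt v, sub_self]
    rw [LinearMap.mem_ker, map_sub, sub_eq_zero] at hk
    exact hk
  have hndα : LinearMap.BilinForm.Nondegenerate α :=
    ⟨fun v h => hnd v h, fun v h => hnd v fun w => by rw [hsymm]; exact h w⟩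
  set Φ := LinearMap.BilinForm.toDual α hndα with hΦ
  set γ : V →ₗ[K] V →ₗ[K] K := α.compl₁₂ (g ∘ₗ t) t with hγ
  set y : Module.End K V := Φ.symm.toLinearMap ∘ₗ γ with hy
  have hyab : ∀ a b : V, α (y a) b = α (g (t a)) (t b) := by
    intro a b
    have h1 : α (Φ.symm (γ a)) b = (γ a) b :=
      LinearMap.BilinForm.apply_toDual_symm_apply (γ a) b
    have h2 : y a = Φ.symm (γ a) := rfl
    rw [h2, h1, hγ, LinearMap.compl₁₂_apply, LinearMap.comp_apply]
  have hysym : IsSymOp α y := by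
    intro u v
    rw [hyab, hsymm u (y v), hyab, hg (t u) (t v), hsymm (t u) (g (t v))]
  refine ⟨y, hysym, ?_⟩
  have key : ∀ u w0 : V, α ((x * y * x) u) w0 = α (g u) w0 := by
    intro u w0
    calc α ((x * y * x) u) w0 = α (x (y (x u))) w0 := rfl
      _ = α (y (x u)) (x w0) := hx _ w0
      _ = α (g (t (x u))) (t (x w0)) := hyab _ _
      _ = α (g u) (t (x w0)) := by rw [hgt u]
      _ = α u (g (t (x w0))) := hg u _
      _ = α u (g w0) := by rw [hgt w0]
      _ = α (g u) w0 := (hg u w0).symm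
  ext u
  have h0 : (x * y * x) u - g u = 0 := by
    apply hnd
    intro w0
    rw [map_sub, LinearMap.sub_apply, key, sub_self]
  have := sub_eq_zero.mp h0
  exact this.symm

end Aux

theorem inner_ideal_of_symmetric_operators
    {K V : Type*} [Field K] (hchar : (2 : K) ≠ 0)
    [AddCommGroup V] [Module K V] [FiniteDimensional K V]
    (α : V →ₗ[K] V →ₗ[K] K)
    (hsymm : ∀ u v : V, α u v = α v u)
    (hnd : ∀ v : V, (∀ w : V, α v w = 0) → v = 0)
    (I : Submodule K (Module.End K V))
    (hIsym : ∀ f ∈ I, IsSymOp α f)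
    (hinner : ∀ f ∈ I, ∀ y : Module.End K V, IsSymOp α y → f * y * f ∈ I) :
    (∃ e : Submodule K V,
      (I : Set (Module.End K V)) =
        {f : Module.End K V | IsSymOp α f ∧ e ≤ LinearMap.ker f}) ∧
    (∃ x : Module.End K V, IsSymOp α x ∧
      (I : Set (Module.End K V)) =
        {w : Module.End K V | ∃ y : Module.End K V, IsSymOp α y ∧ w = x * y * x}) := by
  classical
  set G : Set V := {w | ∃ f ∈ I, ∃ v : V, f v = w} with hG
  set W : Submodule K V := Submodule.span K G with hW
  -- rank-one operators from elements of I
  have hQmemG : ∀ f ∈ I, ∀ v : V, Qop α (f v) ∈ I := by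
    intro f hf v
    have := hinner f hf (Qop α v) (isSymOp_Qop α hsymm v)
    rwa [comp_Qop_comp α hsymm (hIsym f hf) v] at this
  -- S-operators on generators
  have hSmemG : ∀ w ∈ G, ∀ w' ∈ G, Sop α w w' ∈ I := by
    rintro w ⟨f, hf, v, rfl⟩ w' ⟨f', hf', v', rfl⟩
    by_cases hw : f v = 0
    · rw [hw, Sop_zero_left]; exact I.zero_mem
    by_cases hw' : f' v' = 0
    · rw [hw', Sop_comm, Sop_zero_left]; exact I.zero_mem
    obtain ⟨a, ha1, ha2⟩ := exists_good α hsymm hnd hw hw'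
    have hq1 : Qop α (f v) ∈ I := hQmemG f hf v
    have hq2 : Qop α (f' v') ∈ I := hQmemG f' hf' v'
    have hya : IsSymOp α (Qop α a) := isSymOp_Qop α hsymm a
    have hcross : Qop α (f v) * Qop α a * Qop α (f' v')
        + Qop α (f' v') * Qop α a * Qop α (f v) ∈ I := by
      have hbig := hinner _ (I.add_mem hq1 hq2) (Qop α a) hya
      have h1 := hinner _ hq1 (Qop α a) hya
      have h2 := hinner _ hq2 (Qop α a) hya
      have hexp : Qop α (f v) * Qop α a * Qop α (f' v')
          + Qop α (f' v') * Qop α a * Qop α (f v)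
          = (Qop α (f v) + Qop α (f' v')) * Qop α a * (Qop α (f v) + Qop α (f' v'))
            - Qop α (f v) * Qop α a * Qop α (f v)
            - Qop α (f' v') * Qop α a * Qop α (f' v') := by noncomm_ring
      rw [hexp]
      exact I.sub_mem (I.sub_mem hbig h1) h2
    rw [Qop_comp_Qop α hsymm hya (f v) (f' v')] at hcross
    have hc : α (f v) (Qop α a (f' v')) ≠ 0 := by
      simp only [Qop_apply, map_smul, smul_eq_mul]
      exact mul_ne_zero ha1 ha2
    have := I.smul_mem (α (f v) (Qop α a (f' v')))⁻¹ hcross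
    rwa [smul_smul, inv_mul_cancel₀ hc, one_smul] at this
  -- S-operators on all of W
  have hSmemW : ∀ w ∈ W, ∀ w' ∈ W, Sop α w w' ∈ I := by
    have step1 : ∀ w ∈ G, ∀ w' ∈ W, Sop α w w' ∈ I := by
      intro w hwG w' hw'
      induction hw' using Submodule.span_induction with
      | mem z hz => exact hSmemG w hwG z hz
      | zero => rw [Sop_comm, Sop_zero_left]; exact I.zero_mem
      | add z₁ z₂ h₁ h₂ ih₁ ih₂ =>
          rw [Sop_comm, Sop_add_left, Sop_comm α z₁ w, Sop_comm α z₂ w]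
          exact I.add_mem ih₁ ih₂
      | smul c z hz ih =>
          rw [Sop_comm, Sop_smul_left, Sop_comm α z w]
          exact I.smul_mem c ih
    intro w hw w' hw'
    induction hw using Submodule.span_induction with
    | mem z hz => exact step1 z hz w' hw'
    | zero => rw [Sop_zero_left]; exact I.zero_mem
    | add z₁ z₂ h₁ h₂ ih₁ ih₂ => rw [Sop_add_left]; exact I.add_mem ih₁ ih₂
    | smul c z hz ih => rw [Sop_smul_left]; exact I.smul_mem c ih
  have hQmemW : ∀ w ∈ W, Qop α w ∈ I := by
    intro w hw
    rw [Qop_eq_smul_Sop α hchar w]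
    exact I.smul_mem _ (hSmemW w hw w hw)
  -- the element x of maximal rank
  set b : Module.Basis (Fin (Module.finrank K W)) K W := Module.finBasis K W with hb
  set x : Module.End K V := ∑ i, Qop α (b i : V) with hx
  have hxI : x ∈ I := Submodule.sum_mem _ fun i _ => hQmemW _ (b i).2
  have hxapp : ∀ u : V, x u = ∑ i, α (b i : V) u • (b i : V) := by
    intro u
    rw [hx, LinearMap.sum_apply]
    rfl
  have hxsym : IsSymOp α x := by
    intro u v
    rw [hxapp u, hxapp v, map_sum, map_sum, LinearMap.sum_apply]
    exact Finset.sum_congr rfl fun i _ => isSymOp_Qop α hsymm (b i : V) u v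
  -- the basis vectors, as vectors of V
  have hbind : LinearIndependent K (fun i => ((b i : V))) :=
    b.linearIndependent.map' W.subtype W.ker_subtype
  have hbspan : Submodule.span K (Set.range fun i => ((b i : V))) = W := by
    have h1 : (Set.range fun i => ((b i : V))) = W.subtype '' Set.range b := by
      rw [← Set.range_comp]; rfl
    rw [h1, Submodule.span_image, b.span_eq, Submodule.map_subtype_top]
  -- kernel of x
  have hker1 : ∀ u : V, x u = 0 → ∀ w ∈ W, α u w = 0 := by
    intro u hu w hwW
    have hcoef : ∀ i, α (b i : V) u = 0 := by
      have h0 : ∑ i, α (b i : V) u • ((b i : V)) = 0 := by rw [← hxapp, hu]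
      exact fun i => linearIndependent_iff'.mp hbind Finset.univ _ h0 i (Finset.mem_univ i)
    have hle : W ≤ LinearMap.ker (α.flip u) := by
      rw [← hbspan]
      rw [Submodule.span_le]
      rintro z ⟨i, rfl⟩
      simp only [SetLike.mem_coe, LinearMap.mem_ker, LinearMap.flip_apply]
      exact hcoef i
    have : α.flip u w = 0 := hle hwW
    rw [LinearMap.flip_apply] at this
    rw [hsymm]; exact this
  -- I is contained in the kernel-condition set
  have hsub1 : (I : Set (Module.End K V))
      ⊆ {f : Module.End K V | IsSymOp α f ∧ LinearMap.ker x ≤ LinearMap.ker f} := by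
    intro f hf
    refine ⟨hIsym f hf, ?_⟩
    intro u hu
    rw [LinearMap.mem_ker] at hu ⊢
    apply hnd
    intro w0
    rw [hIsym f hf u w0]
    exact hker1 u hu (f w0) (Submodule.subset_span ⟨f, hf, w0, rfl⟩)
  have hsub2 : {w : Module.End K V | ∃ y : Module.End K V, IsSymOp α y ∧ w = x * y * x}
      ⊆ (I : Set (Module.End K V)) := by
    rintro _ ⟨y, hy, rfl⟩
    exact hinner x hxI y hy
  have hsub3 : {f : Module.End K V | IsSymOp α f ∧ LinearMap.ker x ≤ LinearMap.ker f}
      ⊆ {w : Module.End K V | ∃ y : Module.End K V, IsSymOp α y ∧ w = x * y * x} := by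
    rintro f ⟨hfs, hfk⟩
    exact exists_symOp_eq α hsymm hnd hxsym hfs hfk
  have hset1 : (I : Set (Module.End K V))
      = {f : Module.End K V | IsSymOp α f ∧ LinearMap.ker x ≤ LinearMap.ker f} :=
    Set.Subset.antisymm hsub1 fun f hf => hsub2 (hsub3 hf)
  refine ⟨⟨LinearMap.ker x, hset1⟩, ⟨x, hxsym, ?_⟩⟩
  exact Set.Subset.antisymm (fun f hf => hsub3 (hsub1 hf)) hsub2
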